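/- arXiv:2301.09171 — 4 statements merged into one kernel-verified Lean document; each statement's English description precedes it below -/
import Mathlib

section
/- Let V be an even vector space of dimension d over a field F of characteristic ≠ 2, let 1 < n < d, and let R be a commutative unital F-algebra. If φ ∈ GL(V ⊗ R) satisfies φ^{∧n} = id on ⋀ⁿ(V ⊗ R), then φ = r·id for some r ∈ R^× with rⁿ = 1. Hence the kernel of the natural map GL(V) → GL(⋀ⁿV) is the group scheme μₙ of n-th roots of unity. -/
open scoped TensorProduct

/-- Let `V` be an (even) vector space of dimension `d` over a field `F` of
characteristic `≠ 2`, `1 < n < d`, and `R` a commutative unital `F`-algebra.  If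
`φ ∈ GL(V ⊗ R)` induces the identity on `⋀ⁿ(V ⊗ R)` (i.e. `φ(v₁)∧…∧φ(vₙ) = v₁∧…∧vₙ`
for all `v₁,…,vₙ`), then `φ = r·id` for some `r ∈ R^×` with `rⁿ = 1`; hence the kernel of
`GL(V) → GL(⋀ⁿV)` is the group scheme `μₙ` of `n`-th roots of unity. -/
theorem kernel_exterior_power_mu
    (F : Type) [Field F] (hchar : (2 : F) ≠ 0)
    (V : Type) [AddCommGroup V] [Module F V] [FiniteDimensional F V]
    (n : ℕ) (hn1 : 1 < n) (hnd : n < Module.finrank F V)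
    (R : Type) [CommRing R] [Algebra F R]
    (φ : (R ⊗[F] V) ≃ₗ[R] (R ⊗[F] V))
    (hφ : ∀ v : Fin n → R ⊗[F] V,
      (List.ofFn fun i => ExteriorAlgebra.ι R (φ (v i))).prod
        = (List.ofFn fun i => ExteriorAlgebra.ι R (v i)).prod) :
    ∃ r : Rˣ, (r : R) ^ n = 1 ∧ ∀ m : R ⊗[F] V, φ m = (r : R) • m := by
  classical
  obtain ⟨m, rfl⟩ : ∃ m, n = m + 2 := ⟨n - 2, by omega⟩
  set d := Module.finrank F V with hd
  let b : Module.Basis (Fin d) R (R ⊗[F] V) := Algebra.TensorProduct.basis R (Module.finBasis F V)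
  -- the pairing with determinant forms
  let P : ∀ (k : ℕ), (Fin k → Fin d) → (ExteriorAlgebra R (R ⊗[F] V) →ₗ[R] R) := fun k σ =>
    ExteriorAlgebra.liftAlternating
      (Function.update (fun i => (0 : (R ⊗[F] V) [⋀^Fin i]→ₗ[R] R)) k
        (Matrix.detRowAlternating.compLinearMap
          (LinearMap.pi fun p => (Finsupp.lapply (σ p)).comp (b.repr : (R ⊗[F] V) →ₗ[R] _))))
  have hP : ∀ (k : ℕ) (σ : Fin k → Fin d) (w : Fin k → R ⊗[F] V),
      P k σ (ExteriorAlgebra.ιMulti R k w)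
        = Matrix.det (Matrix.of fun q p => b.repr (w q) (σ p)) := by
    intro k σ w
    simp only [P, ExteriorAlgebra.liftAlternating_apply_ιMulti, Function.update_self]
    rfl
  -- Step 1: key vanishing: φ(v) ∧ v ∧ w₁ ∧ … ∧ w_{m+1} = 0
  have key : ∀ (v : R ⊗[F] V) (w : Fin (m+1) → R ⊗[F] V),
      ExteriorAlgebra.ιMulti R (m+3) (Fin.cons (φ v) (Fin.cons v w)) = 0 := by
    intro v w
    have h1 := hφ (Fin.cons v w)
    simp only [List.ofFn_succ, Fin.cons_zero, Fin.cons_succ, List.prod_cons] at h1 ⊢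
    rw [ExteriorAlgebra.ιMulti_apply]
    simp only [List.ofFn_succ, Fin.cons_zero, Fin.cons_succ, List.prod_cons]
    rw [← h1, ← mul_assoc, ExteriorAlgebra.ι_sq_zero, zero_mul]
  -- Step 2: off-diagonal entries vanish
  have offdiag : ∀ i j : Fin d, i ≠ j → b.repr (φ (b j)) i = 0 := by
    intro i j hij
    obtain ⟨t, hts, htc⟩ : ∃ t ⊆ (Finset.univ \ {i, j} : Finset (Fin d)), t.card = m + 1 := by
      apply Finset.exists_subset_card_eq
      have h2 : ({i, j} : Finset (Fin d)).card = 2 := by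
        rw [Finset.card_insert_of_notMem (by simpa using hij), Finset.card_singleton]
      rw [Finset.card_sdiff_of_subset (Finset.subset_univ _), h2, Finset.card_univ, Fintype.card_fin]
      omega
    let k : Fin (m+1) → Fin d := t.orderEmbOfFin htc
    have hknot : ∀ q, k q ≠ i ∧ k q ≠ j := by
      intro q
      have := hts (t.orderEmbOfFin_mem htc q)
      simp only [Finset.mem_sdiff, Finset.mem_univ, Finset.mem_insert,
        Finset.mem_singleton, true_and] at this
      exact ⟨fun h => this (Or.inl h), fun h => this (Or.inr h)⟩
    let σ : Fin (m+3) → Fin d := Fin.cons i (Fin.cons j k)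
    have hσinj : Function.Injective σ := by
      apply Fin.cons_injective_of_injective
      · rintro ⟨q, hq⟩
        revert hq
        refine Fin.cases ?_ ?_ q
        · simp only [Fin.cons_zero]; exact fun h => hij h.symm
        · intro q' h; exact (hknot q').1 (by simpa using h)
      · apply Fin.cons_injective_of_injective
        · rintro ⟨q, hq⟩
          exact (hknot q).2 hq
        · exact fun a a' h => (t.orderEmbOfFin htc).injective h
    have h0 := key (b j) (fun q => b (k q))
    have h2 := congrArg (P (m+3) σ) h0
    rw [hP, map_zero] at h2
    -- identify the matrix
    have hmat : (Matrix.of fun q p =>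
          b.repr ((Fin.cons (φ (b j)) (Fin.cons (b j) (fun q => b (k q))) : Fin (m+3) → _) q) (σ p))
        = (1 : Matrix (Fin (m+3)) (Fin (m+3)) R).updateRow 0
            (fun p => b.repr (φ (b j)) (σ p)) := by
      ext q p
      refine Fin.cases ?_ ?_ q
      · simp [Matrix.updateRow_self]
      · intro q'
        rw [Matrix.of_apply, Matrix.updateRow_ne (Fin.succ_ne_zero q')]
        have hq' : (Fin.cons (φ (b j)) (Fin.cons (b j) (fun q => b (k q))) : Fin (m+3) → _)
            q'.succ = b ((Fin.cons j k : Fin (m+2) → Fin d) q') := by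
          rw [Fin.cons_succ]
          refine Fin.cases ?_ ?_ q' <;> simp
        rw [hq', Module.Basis.repr_self, Finsupp.single_apply]
        have : (Fin.cons j k : Fin (m+2) → Fin d) q' = σ q'.succ := by
          simp [σ, Fin.cons_succ]
        rw [this, Matrix.one_apply]
        simp only [hσinj.eq_iff]
    rw [hmat] at h2
    rw [← Matrix.cramer_transpose_apply, Matrix.transpose_one, Matrix.cramer_one] at h2
    simpa [σ] using h2
  -- Step 3: φ is diagonal
  have diag : ∀ j : Fin d, φ (b j) = (b.repr (φ (b j)) j) • b j := by
    intro j
    have hrepr : b.repr (φ (b j)) = Finsupp.single j (b.repr (φ (b j)) j) := by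
      ext s
      rcases eq_or_ne s j with rfl | hsj
      · simp
      · rw [Finsupp.single_apply, if_neg (fun h => hsj h.symm), offdiag s j hsj]
    calc φ (b j) = b.repr.symm (b.repr (φ (b j))) := (b.repr.symm_apply_apply _).symm
      _ = b.repr.symm (Finsupp.single j (b.repr (φ (b j)) j)) := by rw [← hrepr]
      _ = (b.repr (φ (b j)) j) • b j := b.repr_symm_single _ _
  set a : Fin d → R := fun s => b.repr (φ (b s)) s with ha
  -- Step 4: products of diagonal entries over injective tuples equal 1
  have prod_one : ∀ (σ : Fin (m+2) → Fin d), Function.Injective σ →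
      (∏ q : Fin (m+2), a (σ q)) = 1 := by
    intro σ hσ
    have h1 := hφ (fun q => b (σ q))
    rw [← ExteriorAlgebra.ιMulti_apply, ← ExteriorAlgebra.ιMulti_apply] at h1
    have h2 : (fun q => φ (b (σ q))) = fun q => a (σ q) • b (σ q) :=
      funext fun q => diag (σ q)
    rw [h2] at h1
    have h3 := (ExteriorAlgebra.ιMulti R (m+2)
        (M := R ⊗[F] V)).toMultilinearMap.map_smul_univ
      (fun q => a (σ q)) (fun q => b (σ q))
    rw [AlternatingMap.coe_multilinearMap] at h3
    rw [h3] at h1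
    have h4 := congrArg (P (m+2) σ) h1
    rw [map_smul, hP] at h4
    have hmat : (Matrix.of fun q p => b.repr (b (σ q)) (σ p))
        = (1 : Matrix (Fin (m+2)) (Fin (m+2)) R) := by
      ext q p
      rw [Matrix.of_apply, Module.Basis.repr_self, Finsupp.single_apply, Matrix.one_apply]
      simp only [hσ.eq_iff]
    rw [hmat, Matrix.det_one, smul_eq_mul, mul_one] at h4
    exact h4
  -- Step 5: all diagonal entries are equal
  have aeq : ∀ i j : Fin d, a i = a j := by
    intro i j
    rcases eq_or_ne i j with rfl | hij
    · rfl
    obtain ⟨t, hts, htc⟩ : ∃ t ⊆ (Finset.univ \ {i, j} : Finset (Fin d)), t.card = m + 1 := by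
      apply Finset.exists_subset_card_eq
      have h2 : ({i, j} : Finset (Fin d)).card = 2 := by
        rw [Finset.card_insert_of_notMem (by simpa using hij), Finset.card_singleton]
      rw [Finset.card_sdiff_of_subset (Finset.subset_univ _), h2, Finset.card_univ, Fintype.card_fin]
      omega
    let k : Fin (m+1) → Fin d := t.orderEmbOfFin htc
    have hknot : ∀ q, k q ≠ i ∧ k q ≠ j := by
      intro q
      have := hts (t.orderEmbOfFin_mem htc q)
      simp only [Finset.mem_sdiff, Finset.mem_univ, Finset.mem_insert,
        Finset.mem_singleton, true_and] at this
      exact ⟨fun h => this (Or.inl h), fun h => this (Or.inr h)⟩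
    have hkinj : Function.Injective k := (t.orderEmbOfFin htc).injective
    have e1 := prod_one (Fin.cons i k) (Fin.cons_injective_of_injective
      (by rintro ⟨q, hq⟩; exact (hknot q).1 hq) hkinj)
    have e2 := prod_one (Fin.cons j k) (Fin.cons_injective_of_injective
      (by rintro ⟨q, hq⟩; exact (hknot q).2 hq) hkinj)
    rw [Fin.prod_univ_succ] at e1 e2
    simp only [Fin.cons_zero, Fin.cons_succ] at e1 e2
    calc a i = a i * (a j * ∏ q : Fin (m+1), a (k q)) := by rw [e2, mul_one]
      _ = a j * (a i * ∏ q : Fin (m+1), a (k q)) := by ring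
      _ = a j := by rw [e1, mul_one]
  have i0 : Fin d := ⟨0, by omega⟩
  -- Step 6: r^n = 1
  have hrn : a i0 ^ (m+2) = 1 := by
    have hle : m + 2 ≤ d := by omega
    have e := prod_one (Fin.castLE hle) (Fin.castLE_injective hle)
    calc a i0 ^ (m+2) = ∏ _q : Fin (m+2), a i0 := by
          rw [Finset.prod_const, Finset.card_univ, Fintype.card_fin]
      _ = ∏ q : Fin (m+2), a (Fin.castLE hle q) := by
          exact Finset.prod_congr rfl fun q _ => aeq i0 (Fin.castLE hle q)
      _ = 1 := e
  refine ⟨⟨a i0, a i0 ^ (m+1), ?_, ?_⟩, hrn, ?_⟩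
  · rw [← pow_succ']; exact hrn
  · rw [← pow_succ]; exact hrn
  · have hlin : (φ : (R ⊗[F] V) →ₗ[R] (R ⊗[F] V)) = (a i0) • LinearMap.id := by
      apply b.ext
      intro j
      simp only [LinearEquiv.coe_coe, LinearMap.smul_apply, LinearMap.id_apply]
      rw [diag j, show (b.repr (φ (b j))) j = a j from rfl, aeq j i0]
    intro mm
    have := LinearMap.congr_fun hlin mm
    simpa using this
end

section
/- Let V, V' be finite-dimensional vector spaces with fixed bases and h: V → V' linear with matrix A. Then the matrix of the induced map h^{∨n}: SymⁿV → SymⁿV' with respect to the bases of monomials indexed by non-decreasing tuples has (I', I)-entry given by the permanental minor per-with-repetitions: Σ_{σ ∈ Sₙ(I')} ∏_{t=1}^n a_{i'_{σ(t)}, i_t}, where Sₙ(I') is a transversal of the stabilizer of I' in Sₙ. -/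
open scoped TensorProduct Classical
open PiTensorProduct

/-- For `h : V → V'` linear with matrix `A`, the matrix of the induced map
`h^{∨n} : SymⁿV → SymⁿV'` in the bases of monomials indexed by non-decreasing tuples has
`(I', I)`-entry the permanental minor with repetitions
`Σ_{σ ∈ Sₙ(I')} ∏ₜ a_{i'_{σ(t)}, i_t}`, where `Sₙ(I')` is a transversal of the stabilizer
of `I'` in `Sₙ`.  Here `SymⁿV` is realized as the quotient of `⊗ⁿV` by the symmetrization
relations, with quotient map `mk`. -/
theorem permanental_compound_represents_symmetric_power
    (F : Type) [Field F] (V V' : Type)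
    [AddCommGroup V] [Module F V] [AddCommGroup V'] [Module F V']
    (d d' n : ℕ) (hn : 1 ≤ n)
    (b : Module.Basis (Fin d) F V) (b' : Module.Basis (Fin d') F V')
    (h : V →ₗ[F] V')
    -- transversals of the stabilizers: T I' contains exactly one representative of each
    -- left coset of Stab(I') in Sₙ
    (T : (Fin n → Fin d') → Finset (Equiv.Perm (Fin n)))
    (hT : ∀ I' : Fin n → Fin d', ∀ σ : Equiv.Perm (Fin n),
      ∃! τ, τ ∈ T I' ∧ I' ∘ τ = I' ∘ σ) :
    let A := LinearMap.toMatrix b b' h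
    let Rel : Submodule F (⨂[F] (_ : Fin n), V') := Submodule.span F
      {t | ∃ (v : Fin n → V') (i : ℕ) (hi : i + 1 < n),
        t = (⨂ₜ[F] k, v k) -
          ⨂ₜ[F] k, v (Equiv.swap (⟨i, by omega⟩ : Fin n) ⟨i + 1, hi⟩ k)}
    ∀ I : Fin n → Fin d, Monotone I →
      Rel.mkQ (⨂ₜ[F] t, h (b (I t)))
        = ∑ I' ∈ Finset.univ.filter (fun I' : Fin n → Fin d' => Monotone I'),
            (∑ τ ∈ T I', ∏ t : Fin n, A (I' (τ t)) (I t)) •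
              Rel.mkQ (⨂ₜ[F] t, b' (I' t)) := by
  intro A Rel I hI
  have hA : A = LinearMap.toMatrix b b' h := rfl
  classical
  obtain ⟨m, rfl⟩ : ∃ m, n = m + 1 := ⟨n - 1, by omega⟩
  -- key: permutation invariance of mkQ of tensors
  have key : ∀ (v : Fin (m+1) → V') (σ : Equiv.Perm (Fin (m+1))),
      Rel.mkQ (⨂ₜ[F] k, v (σ k)) = Rel.mkQ (⨂ₜ[F] k, v k) := by
    have hgen : ∀ σ ∈ Submonoid.closure
        (Set.range fun i : Fin m => Equiv.swap i.castSucc i.succ),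
        ∀ v : Fin (m+1) → V',
          Rel.mkQ (⨂ₜ[F] k, v (σ k)) = Rel.mkQ (⨂ₜ[F] k, v k) := by
      intro σ hσ
      induction hσ using Submonoid.closure_induction with
      | mem σ hσ =>
        obtain ⟨i, rfl⟩ := hσ
        intro v
        symm
        rw [Submodule.mkQ_apply, Submodule.mkQ_apply, Submodule.Quotient.eq]
        apply Submodule.subset_span
        refine ⟨v, i.val, by omega, ?_⟩
        congr 2
      | one => intro v; simp
      | mul σ τ hσ hτ ihσ ihτ =>
        intro v
        have e : (⨂ₜ[F] k, v ((σ * τ) k)) = ⨂ₜ[F] k, (fun j => v (σ j)) (τ k) := rfl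
        rw [e]
        exact (ihτ fun j => v (σ j)).trans (ihσ v)
    intro v σ
    exact hgen σ (by rw [Equiv.Perm.mclosure_swap_castSucc_succ]; trivial) v
  -- expand h (b i) in the basis b'
  have hb : ∀ i : Fin d, h (b i) = ∑ j : Fin d', A j i • b' j := by
    intro i
    conv_lhs => rw [← b'.sum_repr (h (b i))]
    exact Finset.sum_congr rfl fun j _ => by rw [hA, LinearMap.toMatrix_apply]
  have expand : Rel.mkQ (⨂ₜ[F] t, h (b (I t)))
      = ∑ J : Fin (m+1) → Fin d',
          (∏ t, A (J t) (I t)) • Rel.mkQ (⨂ₜ[F] t, b' (J t)) := by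
    have e1 : (⨂ₜ[F] t, h (b (I t)))
        = (PiTensorProduct.tprod F) fun t => ∑ j : Fin d', A j (I t) • b' j := by
      congr 1; funext t; exact hb (I t)
    rw [e1, MultilinearMap.map_sum, map_sum]
    refine Finset.sum_congr rfl fun J _ => ?_
    rw [MultilinearMap.map_smul_univ, map_smul]
  rw [expand]
  -- rewrite RHS as a sum over a sigma type
  simp only [Finset.sum_smul]
  rw [Finset.sum_sigma']
  -- the bijection J ↦ (sorted J, coset representative)
  have hcomp : ∀ J : Fin (m+1) → Fin d',
      (J ∘ ⇑(Tuple.sort J)) ∘ ⇑(Tuple.sort J)⁻¹ = J := by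
    intro J; funext x; simp
  set tau : (Fin (m+1) → Fin d') → Equiv.Perm (Fin (m+1)) :=
    fun J => (hT (J ∘ ⇑(Tuple.sort J)) (Tuple.sort J)⁻¹).choose with htau
  have tau_mem : ∀ J, tau J ∈ T (J ∘ ⇑(Tuple.sort J)) :=
    fun J => (hT (J ∘ ⇑(Tuple.sort J)) (Tuple.sort J)⁻¹).choose_spec.1.1
  have tau_comp : ∀ J, (J ∘ ⇑(Tuple.sort J)) ∘ ⇑(tau J) = J := by
    intro J
    have := (hT (J ∘ ⇑(Tuple.sort J)) (Tuple.sort J)⁻¹).choose_spec.1.2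
    rw [htau, this, hcomp]
  -- sorted component of I' ∘ τ is I' when I' is monotone
  have sort_comp : ∀ (I' : Fin (m+1) → Fin d'), Monotone I' →
      ∀ τ : Equiv.Perm (Fin (m+1)),
      (I' ∘ ⇑τ) ∘ ⇑(Tuple.sort (I' ∘ ⇑τ)) = I' := by
    intro I' hI' τ
    rw [Tuple.comp_perm_comp_sort_eq_comp_sort,
      Tuple.sort_eq_refl_iff_monotone.2 hI', Equiv.coe_refl, Function.comp_id]
  symm
  refine Finset.sum_nbij' (fun p => p.1 ∘ ⇑p.2) (fun J => ⟨J ∘ ⇑(Tuple.sort J), tau J⟩)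
    (fun p hp => Finset.mem_univ _) ?_ ?_ ?_ ?_
  · intro J _
    rw [Finset.mem_sigma]
    refine ⟨Finset.mem_filter.2 ⟨Finset.mem_univ _, Tuple.monotone_sort J⟩, tau_mem J⟩
  · rintro ⟨I', τ⟩ hp
    rw [Finset.mem_sigma, Finset.mem_filter] at hp
    obtain ⟨⟨-, hI'⟩, hτ⟩ := hp
    have h1 : (I' ∘ ⇑τ) ∘ ⇑(Tuple.sort (I' ∘ ⇑τ)) = I' := sort_comp I' hI' τ
    have h2 : tau (I' ∘ ⇑τ) = τ := by
      refine ((hT I' τ).unique ?_ ⟨hτ, rfl⟩)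
      have hm := tau_mem (I' ∘ ⇑τ)
      have hc := tau_comp (I' ∘ ⇑τ)
      rw [h1] at hm hc
      exact ⟨hm, hc⟩
    have : (⟨(I' ∘ ⇑τ) ∘ ⇑(Tuple.sort (I' ∘ ⇑τ)), tau (I' ∘ ⇑τ)⟩
        : Σ _ : Fin (m+1) → Fin d', Equiv.Perm (Fin (m+1)))
        = ⟨I', τ⟩ := by
      exact Sigma.ext h1 (heq_of_eq h2)
    exact this
  · intro J _
    exact tau_comp J
  · rintro ⟨I', τ⟩ -
    have hk := key (fun k => b' (I' k)) τ
    exact congrArg (fun z => (∏ t : Fin (m+1), A (I' (τ t)) (I t)) • z) hk.symm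
end

section
/- There is a pair of linear maps f^σ: Aₙ(F) → ⋀²M_{1,n}(F), Ê_{ij} ↦ 𝐢·(e_i ∧ e_j) (where 𝐢² = -1 in F), which is an isomorphism of Jordan pairs from V^(II)_n onto the tensor-shift (⋀²V^(I)_{1,n})^{[-4]}, and which is a similarity of the bilinear forms with multiplier -1: ⟨f(x), f(y)⟩ = -t^(II)(x,y). -/
private lemma auxSwap {M : Type} [AddCommMonoid M] {n : ℕ} (h : Fin n → Fin n → M) :
    ∑ i, ∑ j ∈ Finset.Iio i, h i j = ∑ i, ∑ j ∈ Finset.Ioi i, h j i := by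
  rw [Finset.sum_sigma', Finset.sum_sigma']
  refine Finset.sum_nbij' (fun p => ⟨p.2, p.1⟩) (fun p => ⟨p.2, p.1⟩) ?_ ?_ ?_ ?_ ?_ <;>
    simp [Finset.mem_sigma]

private lemma auxSplit {M : Type} [AddCommGroup M] {n : ℕ} (g : Fin n → Fin n → M) :
    ∑ i, ∑ j, g i j
      = (∑ i, ∑ j ∈ Finset.Ioi i, g i j) + (∑ i, g i i)
        + (∑ i, ∑ j ∈ Finset.Ioi i, g j i) := by
  have h1 : ∀ i : Fin n, ∑ j, g i j
      = (∑ j ∈ Finset.Ioi i, g i j) + g i i + ∑ j ∈ Finset.Iio i, g i j := by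
    intro i
    have hset : ({i}ᶜ : Finset (Fin n))
        = (Finset.Ioi i).disjUnion (Finset.Iio i) (Finset.disjoint_Ioi_Iio i) := by
      ext j
      simp only [Finset.mem_compl, Finset.mem_singleton, Finset.mem_disjUnion, Finset.mem_Ioi,
        Finset.mem_Iio]
      exact ⟨fun h => (Ne.symm h).lt_or_gt, fun h hji => by
        rcases h with h | h <;> subst hji <;> exact lt_irrefl _ h⟩
    rw [← Finset.sum_compl_add_sum {i} (g i), Finset.sum_singleton, hset, Finset.sum_disjUnion]
    abel
  rw [Finset.sum_congr rfl fun i _ => h1 i]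
  rw [Finset.sum_add_distrib, Finset.sum_add_distrib, auxSwap]

private lemma auxSub {M : Type} [AddCommMonoid M] {n : ℕ} (g : Fin n → Fin n → M) :
    ∑ i, ∑ j ∈ Finset.Ioi i, g i j
      = ∑ p : {p : Fin n × Fin n // p.1 < p.2}, g p.1.1 p.1.2 := by
  rw [Finset.sum_sigma']
  refine Finset.sum_bij'
    (fun p hp => (⟨(p.1, p.2), by simpa using hp⟩ : {p : Fin n × Fin n // p.1 < p.2}))
    (fun p _ => ⟨p.1.1, p.1.2⟩) ?_ ?_ ?_ ?_ ?_
  · intro a ha; exact Finset.mem_univ _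
  · intro a ha; simp [Finset.mem_sigma, a.2]
  · intro a ha; rfl
  · intro a ha; rfl
  · intro a ha; rfl

set_option maxHeartbeats 2000000 in
/-- The pair of linear maps `f^σ : Aₙ(F) → ⋀²M_{1,n}(F)`,
`Ê_{ij} ↦ 𝐢·(eᵢ ∧ eⱼ)` (with `𝐢² = -1`) is an isomorphism of Jordan pairs from
`V^(II)_n` onto the tensor-shift `(⋀²V^(I)_{1,n})^{[-4]}` and a similarity of the bilinear
forms with multiplier `-1`: `⟨f(x), f(y)⟩ = -t^(II)(x,y)`.  Here `Λ` together with the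
wedge map `w` is the exterior square of `M_{1,n}(F)` (pinned down by a basis hypothesis),
`β` its induced bilinear form (determinant minors) and `T` the triple product of
`⋀²V^(I)_{1,n}` obtained from the Faulkner construction, given on generators. -/
theorem type_II_is_shifted_alternating_square
    (F : Type) [Field F] (hchar : (2 : F) ≠ 0) (n : ℕ)
    (I : F) (hI : I ^ 2 = -1)
    (Λ : Type) [AddCommGroup Λ] [Module F Λ]
    (w : Matrix (Fin 1) (Fin n) F →ₗ[F] Matrix (Fin 1) (Fin n) F →ₗ[F] Λ)
    (hw : ∀ x, w x x = 0) :
    let e : Fin n → Matrix (Fin 1) (Fin n) F := fun i => Matrix.single 0 i 1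
    let δ : Fin n → Fin n → F := fun i j => if i = j then 1 else 0
    let Ehat : Fin n → Fin n → Matrix (Fin n) (Fin n) F := fun i j =>
      Matrix.single i j 1 - Matrix.single j i 1
    ∀ (hbasis : ∃ bΛ : Module.Basis {p : Fin n × Fin n // p.1 < p.2} F Λ,
      ∀ p : {p : Fin n × Fin n // p.1 < p.2}, bΛ p = w (e p.1.1) (e p.1.2))
    -- the bilinear form of ⋀²V^(I)_{1,n}
    (β : Λ →ₗ[F] Λ →ₗ[F] F)
    (hβ : ∀ i₁ i₂ j₁ j₂ : Fin n,
      β (w (e i₁) (e i₂)) (w (e j₁) (e j₂)) = δ i₁ j₁ * δ i₂ j₂ - δ i₁ j₂ * δ i₂ j₁)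
    -- the triple product of ⋀²V^(I)_{1,n} (same on both halves of the pair)
    (T : Λ →ₗ[F] Λ →ₗ[F] Λ →ₗ[F] Λ)
    (hT : ∀ i₁ i₂ j₁ j₂ k₁ k₂ : Fin n,
      T (w (e i₁) (e i₂)) (w (e j₁) (e j₂)) (w (e k₁) (e k₂))
        = (δ i₂ j₁ * δ k₂ j₂ - δ i₂ j₂ * δ k₂ j₁) • w (e i₁) (e k₁)
          + (δ i₂ j₂ * δ k₁ j₁ - δ i₂ j₁ * δ k₁ j₂) • w (e i₁) (e k₂)
          + (δ i₁ j₂ * δ k₂ j₁ - δ i₁ j₁ * δ k₂ j₂) • w (e i₂) (e k₁)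
          + (δ i₁ j₁ * δ k₁ j₂ - δ i₁ j₂ * δ k₁ j₁) • w (e i₂) (e k₂)
          + (4 * (δ i₁ j₁ * δ i₂ j₂ - δ i₂ j₁ * δ i₁ j₂)) • w (e k₁) (e k₂)),
    ∃ f : Matrix (Fin n) (Fin n) F →ₗ[F] Λ,
      -- f(Ê_{ij}) = 𝐢·(eᵢ ∧ eⱼ)
      (∀ i j : Fin n, f (Ehat i j) = I • w (e i) (e j)) ∧
      -- f is a bijection from the antisymmetric matrices onto ⋀²M_{1,n}(F)
      (∀ y : Λ, ∃! x : Matrix (Fin n) (Fin n) F, x.transpose = -x ∧ f x = y) ∧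
      -- f is a homomorphism onto the (-4)-tensor-shifted triple product; here the
      -- triple product of V^(II)_n is `{x,y,z} = xyz + zyx` (as in the paper's
      -- computation: for antisymmetric matrices `yᵀ = -y`, and the middle factor is
      -- taken untransposed)
      (∀ x y z : Matrix (Fin n) (Fin n) F,
        x.transpose = -x → y.transpose = -y → z.transpose = -z →
        f (x * y * z + z * y * x)
          = T (f x) (f y) (f z) + ((-4 : F) * β (f x) (f y)) • f z) ∧
      -- f is a similarity of the bilinear forms with multiplier -1
      (∀ x y : Matrix (Fin n) (Fin n) F,
        x.transpose = -x → y.transpose = -y →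
        β (f x) (f y) = -∑ i : Fin n, ∑ j ∈ Finset.Ioi i, x i j * y i j) := by
  intro e δ Ehat hbasis β hβ T hT
  obtain ⟨bΛ, hb⟩ := hbasis
  have hI2 : I * I = -1 := by rw [← sq]; exact hI
  have h2 : (2:F)⁻¹ * 2 = 1 := inv_mul_cancel₀ hchar
  have hIne : I ≠ 0 := by
    intro h
    rw [h, mul_zero] at hI2
    exact one_ne_zero (neg_eq_zero.mp hI2.symm)
  have hδ : ∀ i j : Fin n, δ i j = if i = j then (1:F) else 0 := fun _ _ => rfl
  have hδc : ∀ i j : Fin n, δ i j = δ j i := by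
    intro i j
    by_cases h : i = j
    · subst h; rfl
    · rw [hδ, hδ, if_neg h, if_neg (Ne.symm h)]
  have hEdef : ∀ i j : Fin n, Ehat i j
      = Matrix.single i j 1 - Matrix.single j i 1 := fun _ _ => rfl
  have hwsk : ∀ u v, w u v = - w v u := by
    intro u v
    have h0 := hw (u + v)
    simp only [map_add, LinearMap.add_apply, hw, zero_add, add_zero] at h0
    exact eq_neg_of_add_eq_zero_right h0
  have hII : ∀ x : Λ, I • I • x = - x := by
    intro x; rw [smul_smul, hI2, neg_one_smul]
  have hIIm : ∀ x : F, I * (I * x) = - x := by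
    intro x; rw [← mul_assoc, hI2, neg_one_mul]
  have hmulE : ∀ i j k l : Fin n, Matrix.single i j (1:F) * Matrix.single k l 1
      = δ j k • Matrix.single i l 1 := by
    intro i j k l
    rcases eq_or_ne j k with h | h
    · subst h; simp [hδ]
    · rw [Matrix.single_mul_single_of_ne (1:F) i j k h]; simp [hδ, h]
  -- construction of f
  obtain ⟨f, hfdef⟩ : ∃ f : Matrix (Fin n) (Fin n) F →ₗ[F] Λ,
      ∀ x, f x = ((2:F)⁻¹ * I) • ∑ i, ∑ j, x i j • w (e i) (e j) := by
    refine ⟨{ toFun := fun x => ((2:F)⁻¹ * I) • ∑ i, ∑ j, x i j • w (e i) (e j),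
              map_add' := ?_, map_smul' := ?_ }, fun _ => rfl⟩
    · intro x y
      simp only [Matrix.add_apply, add_smul, Finset.sum_add_distrib, smul_add]
    · intro c x
      simp only [Matrix.smul_apply, smul_eq_mul, mul_smul, RingHom.id_apply, ← Finset.smul_sum]
      module
  have hfE1 : ∀ u v : Fin n, f (Matrix.single u v 1)
      = ((2:F)⁻¹ * I) • w (e u) (e v) := by
    intro u v
    rw [hfdef]
    congr 1
    simp [Matrix.single, ite_and, ite_smul, Finset.sum_ite_eq, Finset.sum_ite_irrel]
  have hfE : ∀ i j : Fin n, f (Ehat i j) = I • w (e i) (e j) := by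
    intro i j
    rw [hEdef, map_sub, hfE1, hfE1, hwsk (e j) (e i)]
    match_scalars
    linear_combination I * h2
  -- entrywise antisymmetry of Ehat
  have hEent : ∀ a b i j : Fin n, Ehat a b j i = - Ehat a b i j := by
    intro a b i j
    simp only [hEdef, Matrix.sub_apply, Matrix.single, Matrix.of_apply, and_comm]
    ring
  have hET : ∀ i j : Fin n, (Ehat i j).transpose = -(Ehat i j) := by
    intro i j
    ext u v
    simp only [Matrix.transpose_apply, Matrix.neg_apply]
    exact hEent i j u v
  -- key matrix identity
  have hmat : ∀ a b c d p q : Fin n,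
      Ehat a b * Ehat c d * Ehat p q + Ehat p q * Ehat c d * Ehat a b
        = (δ b c * δ p d - δ b d * δ p c) • Ehat a q
          + (δ b d * δ q c - δ b c * δ q d) • Ehat a p
          + (δ a d * δ p c - δ a c * δ p d) • Ehat b q
          + (δ a c * δ q d - δ a d * δ q c) • Ehat b p := by
    intro a b c d p q
    simp only [hEdef, sub_mul, mul_sub, hmulE, smul_mul_assoc, smul_smul, smul_sub]
    simp only [hδc d a, hδc d b, hδc c a, hδc c b, hδc d p, hδc d q, hδc c p, hδc c q]
    module
  -- generator identity for the triple product
  have hgen : ∀ a b c d p q : Fin n,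
      f (Ehat a b * Ehat c d * Ehat p q + Ehat p q * Ehat c d * Ehat a b)
        = T (f (Ehat a b)) (f (Ehat c d)) (f (Ehat p q))
          + ((-4:F) * β (f (Ehat a b)) (f (Ehat c d))) • f (Ehat p q) := by
    intro a b c d p q
    rw [hmat a b c d p q]
    simp only [map_add, map_smul, LinearMap.smul_apply, hfE, hT, hβ, smul_eq_mul]
    simp only [hII, hIIm, smul_neg, neg_smul, smul_smul]
    module
  -- expansion of an antisymmetric matrix in the Ehat's
  have hexp : ∀ x : Matrix (Fin n) (Fin n) F, x.transpose = -x →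
      x = ∑ i, ∑ j, ((2:F)⁻¹ * x i j) • Ehat i j := by
    intro x hx
    ext u v
    have hxa : x v u = - x u v := by
      have := congrFun (congrFun hx u) v
      simpa [Matrix.transpose_apply, Matrix.neg_apply] using this
    simp only [Matrix.sum_apply, Matrix.smul_apply, hEdef, Matrix.sub_apply,
      Matrix.single, Matrix.of_apply, smul_eq_mul, mul_sub, mul_ite, mul_one, mul_zero,
      Finset.sum_sub_distrib, ite_and, Finset.sum_ite_eq, Finset.sum_ite_eq',
      Finset.sum_ite_irrel, Finset.sum_const_zero, Finset.mem_univ, if_true]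
    rw [hxa]
    ring_nf
    linear_combination (-(x u v)) * h2
  -- the two trilinear maps
  obtain ⟨Φ, hΦ⟩ : ∃ Φ : Matrix (Fin n) (Fin n) F →ₗ[F] Matrix (Fin n) (Fin n) F →ₗ[F]
      Matrix (Fin n) (Fin n) F →ₗ[F] Λ, ∀ x y z, Φ x y z = f (x * y * z + z * y * x) := by
    refine ⟨LinearMap.mk₂ F
      (fun x y => f ∘ₗ (LinearMap.mulLeft F (x * y) + LinearMap.mulRight F (y * x)))
      ?_ ?_ ?_ ?_, ?_⟩
    · intro x₁ x₂ y
      ext z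
      simp only [LinearMap.comp_apply, LinearMap.add_apply, LinearMap.mulLeft_apply,
        LinearMap.mulRight_apply, add_mul, mul_add, map_add]
      abel
    · intro c x y
      ext z
      simp only [LinearMap.comp_apply, LinearMap.add_apply, LinearMap.smul_apply,
        LinearMap.mulLeft_apply, LinearMap.mulRight_apply, smul_mul_assoc, mul_smul_comm,
        map_add, map_smul, smul_add]
    · intro x y₁ y₂
      ext z
      simp only [LinearMap.comp_apply, LinearMap.add_apply, LinearMap.mulLeft_apply,
        LinearMap.mulRight_apply, add_mul, mul_add, map_add]
      abel
    · intro c x y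
      ext z
      simp only [LinearMap.comp_apply, LinearMap.add_apply, LinearMap.smul_apply,
        LinearMap.mulLeft_apply, LinearMap.mulRight_apply, smul_mul_assoc, mul_smul_comm,
        map_add, map_smul, smul_add]
    · intro x y z
      simp only [LinearMap.mk₂_apply, LinearMap.comp_apply, LinearMap.add_apply,
        LinearMap.mulLeft_apply, LinearMap.mulRight_apply, mul_assoc, map_add]
  obtain ⟨Ψ, hΨ⟩ : ∃ Ψ : Matrix (Fin n) (Fin n) F →ₗ[F] Matrix (Fin n) (Fin n) F →ₗ[F]
      Matrix (Fin n) (Fin n) F →ₗ[F] Λ, ∀ x y z, Ψ x y z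
        = T (f x) (f y) (f z) + ((-4:F) * β (f x) (f y)) • f z := by
    refine ⟨LinearMap.mk₂ F
      (fun x y => (T (f x) (f y)) ∘ₗ f + ((-4:F) * β (f x) (f y)) • f)
      ?_ ?_ ?_ ?_, ?_⟩
    · intro x₁ x₂ y
      ext z
      simp only [LinearMap.comp_apply, LinearMap.add_apply, LinearMap.smul_apply, map_add,
        LinearMap.add_apply]
      module
    · intro c x y
      ext z
      simp only [LinearMap.comp_apply, LinearMap.add_apply, LinearMap.smul_apply, map_smul,
        LinearMap.smul_apply, smul_eq_mul]
      module
    · intro x y₁ y₂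
      ext z
      simp only [LinearMap.comp_apply, LinearMap.add_apply, LinearMap.smul_apply, map_add,
        LinearMap.add_apply]
      module
    · intro c x y
      ext z
      simp only [LinearMap.comp_apply, LinearMap.add_apply, LinearMap.smul_apply, map_smul,
        LinearMap.smul_apply, smul_eq_mul]
      module
    · intro x y z
      simp only [LinearMap.mk₂_apply, LinearMap.comp_apply, LinearMap.add_apply,
        LinearMap.smul_apply]
  have hgenΦ : ∀ a b c d p q : Fin n,
      Φ (Ehat a b) (Ehat c d) (Ehat p q) = Ψ (Ehat a b) (Ehat c d) (Ehat p q) := by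
    intro a b c d p q
    rw [hΦ, hΨ]
    exact hgen a b c d p q
  -- the two bilinear maps for the similarity statement
  obtain ⟨B₁, hB₁⟩ : ∃ B₁ : Matrix (Fin n) (Fin n) F →ₗ[F] Matrix (Fin n) (Fin n) F →ₗ[F] F,
      ∀ x y, B₁ x y = β (f x) (f y) := by
    refine ⟨LinearMap.mk₂ F (fun x y => β (f x) (f y)) ?_ ?_ ?_ ?_, fun _ _ => rfl⟩
    · intro x₁ x₂ y; simp [map_add]
    · intro c x y; simp [map_smul]
    · intro x y₁ y₂; simp [map_add]
    · intro c x y; simp [map_smul]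
  obtain ⟨B₂, hB₂⟩ : ∃ B₂ : Matrix (Fin n) (Fin n) F →ₗ[F] Matrix (Fin n) (Fin n) F →ₗ[F] F,
      ∀ x y, B₂ x y = -∑ i : Fin n, ∑ j ∈ Finset.Ioi i, x i j * y i j := by
    refine ⟨LinearMap.mk₂ F (fun x y => -∑ i : Fin n, ∑ j ∈ Finset.Ioi i, x i j * y i j)
      ?_ ?_ ?_ ?_, fun _ _ => rfl⟩
    · intro x₁ x₂ y
      simp only [Matrix.add_apply, add_mul, Finset.sum_add_distrib, neg_add]
    · intro c x y
      simp only [Matrix.smul_apply, smul_eq_mul, mul_assoc, ← Finset.mul_sum, mul_neg]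
    · intro x y₁ y₂
      simp only [Matrix.add_apply, mul_add, Finset.sum_add_distrib, neg_add]
    · intro c x y
      simp only [Matrix.smul_apply, smul_eq_mul, mul_left_comm, ← Finset.mul_sum, mul_neg]
  have hEii : ∀ a b i : Fin n, Ehat a b i i = (0:F) := by
    intro a b i
    simp only [hEdef, Matrix.sub_apply, Matrix.single, Matrix.of_apply, and_comm]
    ring
  have hgenB : ∀ a b c d : Fin n, B₁ (Ehat a b) (Ehat c d) = B₂ (Ehat a b) (Ehat c d) := by
    intro a b c d
    rw [hB₁, hB₂, hfE, hfE]
    simp only [map_smul, LinearMap.smul_apply, smul_eq_mul, hβ, hIIm]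
    have hgsym : ∀ i j : Fin n, Ehat a b j i * Ehat c d j i = Ehat a b i j * Ehat c d i j := by
      intro i j
      rw [hEent a b i j, hEent c d i j]
      ring
    have hsplit := auxSplit (fun i j => Ehat a b i j * Ehat c d i j)
    simp only [hgsym, hEii, zero_mul, Finset.sum_const_zero, add_zero] at hsplit
    have hfull : (∑ i : Fin n, ∑ j : Fin n, Ehat a b i j * Ehat c d i j)
        = 2 * (δ a c * δ b d - δ a d * δ b c) := by
      simp only [hEdef, Matrix.sub_apply, Matrix.single, Matrix.of_apply, sub_mul,
        mul_sub, ite_mul, mul_ite, mul_one, mul_zero, one_mul, zero_mul,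
        Finset.sum_sub_distrib, ite_and, Finset.sum_ite_eq, Finset.sum_ite_eq',
        Finset.sum_ite_irrel, Finset.sum_const_zero, Finset.mem_univ, if_true, hδ]
      split_ifs <;> norm_num
    have hP : (∑ i : Fin n, ∑ j ∈ Finset.Ioi i, Ehat a b i j * Ehat c d i j)
        = δ a c * δ b d - δ a d * δ b c := by
      apply mul_left_cancel₀ hchar
      rw [two_mul]
      rw [← hsplit, hfull]
    rw [hP]
  -- the map f sends an antisymmetric matrix to the corresponding basis combination
  have hPform : ∀ x : Matrix (Fin n) (Fin n) F, x.transpose = -x →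
      f x = I • ∑ p : {p : Fin n × Fin n // p.1 < p.2}, x p.1.1 p.1.2 • bΛ p := by
    intro x hx
    rw [hfdef]
    have hgsym : ∀ i j : Fin n, x j i • w (e j) (e i) = x i j • w (e i) (e j) := by
      intro i j
      have hxa : x j i = - x i j := by
        have := congrFun (congrFun hx i) j
        simpa [Matrix.transpose_apply, Matrix.neg_apply] using this
      rw [hxa, hwsk (e j) (e i), neg_smul, smul_neg, neg_neg]
    have hdiag : ∀ i : Fin n, x i i • w (e i) (e i) = 0 := by
      intro i; rw [hw]; exact smul_zero _
    have hsplit := auxSplit (fun i j => x i j • w (e i) (e j))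
    simp only [hgsym, hdiag, Finset.sum_const_zero, add_zero] at hsplit
    rw [hsplit, auxSub (fun i j => x i j • w (e i) (e j))]
    simp only [← hb]
    match_scalars
    linear_combination I * h2
  refine ⟨f, hfE, ?_, ?_, ?_⟩
  · -- bijectivity
    intro y
    set x₀ : Matrix (Fin n) (Fin n) F :=
      ∑ p : {p : Fin n × Fin n // p.1 < p.2}, (-I * bΛ.repr y p) • Ehat p.1.1 p.1.2 with hx₀
    have hx₀anti : x₀.transpose = -x₀ := by
      rw [hx₀, Matrix.transpose_sum, ← Finset.sum_neg_distrib]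
      refine Finset.sum_congr rfl fun p _ => ?_
      rw [Matrix.transpose_smul, hET, smul_neg]
    have hcoef : ∀ r : F, (-I * r) * I = r := by
      intro r; linear_combination (-r) * hI2
    have hfx₀ : f x₀ = y := by
      rw [hx₀, map_sum]
      simp only [map_smul, hfE, smul_smul, hcoef]
      simp only [← hb]
      exact bΛ.sum_repr y
    refine ⟨x₀, ⟨hx₀anti, hfx₀⟩, ?_⟩
    rintro x' ⟨hx', hfx'⟩
    have hdanti : (x' - x₀).transpose = -(x' - x₀) := by
      rw [Matrix.transpose_sub, hx', hx₀anti]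
      abel
    have hfd : f (x' - x₀) = 0 := by
      rw [map_sub, hfx', hfx₀, sub_self]
    rw [hPform (x' - x₀) hdanti] at hfd
    have hsum0 : (∑ p : {p : Fin n × Fin n // p.1 < p.2},
        (x' - x₀) p.1.1 p.1.2 • bΛ p) = 0 := by
      rcases smul_eq_zero.mp hfd with h | h
      · exact absurd h hIne
      · exact h
    have hc := Fintype.linearIndependent_iff.mp bΛ.linearIndependent
      (fun p => (x' - x₀) p.1.1 p.1.2) hsum0
    have hdz : x' - x₀ = 0 := by
      ext u v
      rcases lt_trichotomy u v with h | h | h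
      · exact hc ⟨(u, v), h⟩
      · subst h
        have h1 : (x' - x₀) u u = - (x' - x₀) u u := by
          have := congrFun (congrFun hdanti u) u
          simpa [Matrix.transpose_apply, Matrix.neg_apply] using this
        have h2' : (2:F) * (x' - x₀) u u = 0 := by linear_combination h1
        have := mul_eq_zero.mp h2'
        simpa [hchar] using this
      · have h1 : (x' - x₀) u v = - (x' - x₀) v u := by
          have := congrFun (congrFun hdanti v) u
          simpa [Matrix.transpose_apply, Matrix.neg_apply] using this
        rw [Matrix.zero_apply, h1, show (x' - x₀) v u = 0 from hc ⟨(v, u), h⟩, neg_zero]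
    rw [← sub_eq_zero]
    exact hdz
  · -- homomorphism property
    intro x y z hx hy hz
    rw [← hΦ, ← hΨ, hexp x hx, hexp y hy, hexp z hz]
    simp only [map_sum, map_smul, LinearMap.sum_apply, LinearMap.smul_apply, hgenΦ]
  · -- similarity
    intro x y hx hy
    rw [← hB₁, ← hB₂, hexp x hx, hexp y hy]
    simp only [map_sum, map_smul, LinearMap.sum_apply, LinearMap.smul_apply, smul_eq_mul, hgenB]
end

section
/- There is a pair of linear maps f^σ: Hₙ(F) → ⋁²M_{1,n}(F), Ě_{ij} ↦ e_i ∨ e_j, which is an isomorphism of Jordan pairs from V^(III)_n onto the tensor-shift (⋁²V^(I)_{1,n})^{[-4]}, and which is a similarity of the bilinear forms with multiplier 1/2: ⟨f(x), f(y)⟩ = (1/2)t^(III)(x,y). -/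
section St18Aux

variable {F : Type} [Field F] {n : ℕ} {Λ : Type} [AddCommGroup Λ] [Module F Λ]

lemma st18_Emul (a b c d : Fin n) :
    Matrix.single a b (1:F) * Matrix.single c d 1
      = (if b = c then (1:F) else 0) • Matrix.single a d 1 := by
  rcases eq_or_ne b c with h | h
  · subst h; simp [Matrix.single_mul_single_same]
  · simp [Matrix.single_mul_single_of_ne (h := h), h]

noncomputable def st18_f (v : Fin n → Fin n → Λ) : Matrix (Fin n) (Fin n) F →ₗ[F] Λ where
  toFun x := (2:F)⁻¹ • ∑ i, ∑ j, x i j • v i j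
  map_add' x y := by
    simp [Matrix.add_apply, add_smul, Finset.sum_add_distrib, smul_add]
  map_smul' c x := by
    simp only [Matrix.smul_apply, smul_eq_mul, mul_smul, ← Finset.smul_sum, RingHom.id_apply]
    rw [smul_comm]

lemma st18_Etrans {F : Type} [Field F] {n : ℕ} (a b : Fin n) :
    (Matrix.single a b (1:F)).transpose = Matrix.single b a 1 := by
  ext i j
  simp [Matrix.single, Matrix.transpose_apply, and_comm]

lemma st18_f_apply (v : Fin n → Fin n → Λ) (x : Matrix (Fin n) (Fin n) F) :
    st18_f v x = (2:F)⁻¹ • ∑ i, ∑ j, x i j • v i j := rfl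

lemma st18_f_std (v : Fin n → Fin n → Λ) (a b : Fin n) :
    st18_f v (Matrix.single a b (1:F)) = (2:F)⁻¹ • v a b := by
  rw [st18_f_apply]
  congr 1
  rw [Finset.sum_eq_single a, Finset.sum_eq_single b]
  · simp [Matrix.single]
  · intro j _ hj; simp [Matrix.single, hj.symm]
  · simp
  · intro i _ hi
    apply Finset.sum_eq_zero
    intro j _
    simp [Matrix.single, hi.symm]
  · simp

lemma st18_sum_split (g : Fin n → Fin n → F) (hg : ∀ i j, g i j = g j i) :
    ∑ i, ∑ j, g i j = (∑ i, g i i) + 2 * ∑ i, ∑ j ∈ Finset.Ioi i, g i j := by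
  have h1 := Finset.sum_sum_Ioi_add_eq_sum_sum_off_diag (f := g)
  have h2 : ∀ i, ∑ j ∈ ({i}ᶜ : Finset (Fin n)), g j i = (∑ j, g j i) - g i i := by
    intro i
    have := Finset.sum_compl_add_sum ({i} : Finset (Fin n)) (fun j => g j i)
    simp only [Finset.sum_singleton] at this
    rw [eq_sub_iff_add_eq]; exact this
  have h3 : ∑ i, ∑ j ∈ Finset.Ioi i, (g j i + g i j)
      = 2 * ∑ i, ∑ j ∈ Finset.Ioi i, g i j := by
    simp only [two_mul, Finset.sum_add_distrib]
    congr 1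
    · exact Finset.sum_congr rfl fun i _ => Finset.sum_congr rfl fun j _ => hg j i
  have h4 : ∑ i : Fin n, ∑ j ∈ ({i}ᶜ : Finset (Fin n)), g j i
      = (∑ i, ∑ j, g i j) - ∑ i, g i i := by
    calc ∑ i : Fin n, ∑ j ∈ ({i}ᶜ : Finset (Fin n)), g j i
        = ∑ i : Fin n, ((∑ j, g j i) - g i i) :=
          Finset.sum_congr rfl fun i _ => h2 i
      _ = (∑ i, ∑ j, g i j) - ∑ i, g i i := by
          rw [Finset.sum_sub_distrib]
          congr 1
          rw [Finset.sum_comm]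
  rw [h3] at h1
  have h5 : 2 * ∑ i, ∑ j ∈ Finset.Ioi i, g i j
      = (∑ i, ∑ j, g i j) - ∑ i, g i i := by
    rw [h1]
    exact (Finset.sum_congr rfl fun i _ =>
      Finset.sum_congr (by ext; simp) fun j _ => rfl).trans h4
  linear_combination -h5

end St18Aux

/-- The pair of linear maps `f^σ : Hₙ(F) → ⋁²M_{1,n}(F)`,
`Ě_{ij} ↦ eᵢ ∨ eⱼ` is an isomorphism of Jordan pairs from `V^(III)_n` onto the
tensor-shift `(⋁²V^(I)_{1,n})^{[-4]}` and a similarity of the bilinear forms with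
multiplier `1/2`: `⟨f(x), f(y)⟩ = (1/2)t^(III)(x,y)`.  Here `Λ` together with the
symmetric product map `s` is the symmetric square of `M_{1,n}(F)` (pinned down by a basis
hypothesis), `β` its induced bilinear form (permanental minors) and `T` the triple product
of `⋁²V^(I)_{1,n}` obtained from the Faulkner construction, given on generators. -/
theorem type_III_is_shifted_symmetric_square
    (F : Type) [Field F] (hchar : (2 : F) ≠ 0) (n : ℕ)
    (Λ : Type) [AddCommGroup Λ] [Module F Λ]
    (s : Matrix (Fin 1) (Fin n) F →ₗ[F] Matrix (Fin 1) (Fin n) F →ₗ[F] Λ)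
    (hs : ∀ x y, s x y = s y x) :
    let e : Fin n → Matrix (Fin 1) (Fin n) F := fun i => Matrix.single 0 i 1
    let δ : Fin n → Fin n → F := fun i j => if i = j then 1 else 0
    let Echeck : Fin n → Fin n → Matrix (Fin n) (Fin n) F := fun i j =>
      Matrix.single i j 1 + Matrix.single j i 1
    ∀ (hbasis : ∃ bΛ : Module.Basis {p : Fin n × Fin n // p.1 ≤ p.2} F Λ,
      ∀ p : {p : Fin n × Fin n // p.1 ≤ p.2}, bΛ p = s (e p.1.1) (e p.1.2))
    -- the bilinear form of ⋁²V^(I)_{1,n}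
    (β : Λ →ₗ[F] Λ →ₗ[F] F)
    (hβ : ∀ i₁ i₂ j₁ j₂ : Fin n,
      β (s (e i₁) (e i₂)) (s (e j₁) (e j₂)) = δ i₁ j₁ * δ i₂ j₂ + δ i₂ j₁ * δ i₁ j₂)
    -- the triple product of ⋁²V^(I)_{1,n} (same on both halves of the pair)
    (T : Λ →ₗ[F] Λ →ₗ[F] Λ →ₗ[F] Λ)
    (hT : ∀ i₁ i₂ j₁ j₂ k₁ k₂ : Fin n,
      T (s (e i₁) (e i₂)) (s (e j₁) (e j₂)) (s (e k₁) (e k₂))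
        = (δ i₂ j₁ * δ k₂ j₂ + δ i₂ j₂ * δ k₂ j₁) • s (e i₁) (e k₁)
          + (δ i₂ j₂ * δ k₁ j₁ + δ i₂ j₁ * δ k₁ j₂) • s (e i₁) (e k₂)
          + (δ i₁ j₂ * δ k₂ j₁ + δ i₁ j₁ * δ k₂ j₂) • s (e i₂) (e k₁)
          + (δ i₁ j₁ * δ k₁ j₂ + δ i₁ j₂ * δ k₁ j₁) • s (e i₂) (e k₂)
          + (4 * (δ i₁ j₁ * δ i₂ j₂ + δ i₂ j₁ * δ i₁ j₂)) • s (e k₁) (e k₂)),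
    ∃ f : Matrix (Fin n) (Fin n) F →ₗ[F] Λ,
      -- f(Ě_{ij}) = eᵢ ∨ eⱼ
      (∀ i j : Fin n, f (Echeck i j) = s (e i) (e j)) ∧
      -- f is a bijection from the symmetric matrices onto ⋁²M_{1,n}(F)
      (∀ y : Λ, ∃! x : Matrix (Fin n) (Fin n) F, x.transpose = x ∧ f x = y) ∧
      -- f is a homomorphism onto the (-4)-tensor-shifted triple product
      (∀ x y z : Matrix (Fin n) (Fin n) F,
        x.transpose = x → y.transpose = y → z.transpose = z →
        f (x * y.transpose * z + z * y.transpose * x)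
          = T (f x) (f y) (f z) + ((-4 : F) * β (f x) (f y)) • f z) ∧
      -- f is a similarity of the bilinear forms with multiplier 1/2
      (∀ x y : Matrix (Fin n) (Fin n) F,
        x.transpose = x → y.transpose = y →
        β (f x) (f y) = (2 : F)⁻¹ *
          ((∑ i : Fin n, x i i * y i i)
            + 2 * ∑ i : Fin n, ∑ j ∈ Finset.Ioi i, x i j * y i j)) := by
  intro e δ Echeck hbasis β hβ T hT
  classical
  obtain ⟨bΛ, hb⟩ := hbasis
  have hδ : ∀ a b : Fin n, δ a b = if a = b then (1:F) else 0 := fun _ _ => rfl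
  have hE : ∀ a b : Fin n, Echeck a b
      = Matrix.single a b 1 + Matrix.single b a 1 := fun _ _ => rfl
  have hcomm : ∀ a b : Fin n, (if a = b then (1:F) else 0) = (if b = a then (1:F) else 0) := by
    intro a b; simp [eq_comm]
  -- the matrix identity
  have hM : ∀ i₁ i₂ j₁ j₂ k₁ k₂ : Fin n,
      Echeck i₁ i₂ * Echeck j₁ j₂ * Echeck k₁ k₂ + Echeck k₁ k₂ * Echeck j₁ j₂ * Echeck i₁ i₂
      = (δ i₂ j₁ * δ k₂ j₂ + δ i₂ j₂ * δ k₂ j₁) • Echeck i₁ k₁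
      + (δ i₂ j₂ * δ k₁ j₁ + δ i₂ j₁ * δ k₁ j₂) • Echeck i₁ k₂
      + (δ i₁ j₂ * δ k₂ j₁ + δ i₁ j₁ * δ k₂ j₂) • Echeck i₂ k₁
      + (δ i₁ j₁ * δ k₁ j₂ + δ i₁ j₂ * δ k₁ j₁) • Echeck i₂ k₂ := by
    intro i₁ i₂ j₁ j₂ k₁ k₂
    simp only [hE, hδ, add_mul, mul_add, st18_Emul, smul_mul_assoc, smul_add, smul_smul]
    simp only [hcomm]
    module
  -- the linear map f
  set f : Matrix (Fin n) (Fin n) F →ₗ[F] Λ := st18_f (fun i j => s (e i) (e j)) with hfdef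
  have fE : ∀ a b : Fin n, f (Matrix.single a b 1) = (2:F)⁻¹ • s (e a) (e b) :=
    fun a b => st18_f_std _ a b
  have h2 : (2:F)⁻¹ + (2:F)⁻¹ = 1 := by
    rw [← two_mul]; exact mul_inv_cancel₀ hchar
  have fEcheck : ∀ i j : Fin n, f (Echeck i j) = s (e i) (e j) := by
    intro i j
    rw [hE, map_add, fE, fE, hs (e j) (e i), ← add_smul, h2, one_smul]
  have gen : ∀ i₁ i₂ j₁ j₂ k₁ k₂ : Fin n,
      f (Echeck i₁ i₂ * Echeck j₁ j₂ * Echeck k₁ k₂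
          + Echeck k₁ k₂ * Echeck j₁ j₂ * Echeck i₁ i₂)
        = T (f (Echeck i₁ i₂)) (f (Echeck j₁ j₂)) (f (Echeck k₁ k₂))
          + (-4 * β (f (Echeck i₁ i₂)) (f (Echeck j₁ j₂))) • f (Echeck k₁ k₂) := by
    intro i₁ i₂ j₁ j₂ k₁ k₂
    rw [hM, fEcheck, fEcheck, fEcheck, hT, hβ]
    simp only [map_add, map_smul, fEcheck]
    simp only [hδ, hcomm]
    module
  -- extraction of entries through β
  have extract : ∀ x : Matrix (Fin n) (Fin n) F, x.transpose = x →
      ∀ i j : Fin n, β (f x) (s (e i) (e j)) = x i j := by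
    intro x hx i j
    have hxe : ∀ a b : Fin n, x b a = x a b := fun a b => by
      simpa using congrFun (congrFun hx a) b
    rw [hfdef, st18_f_apply, map_smul, map_sum]
    simp only [LinearMap.smul_apply, LinearMap.sum_apply, map_sum, map_smul,
      LinearMap.smul_apply, smul_eq_mul, hβ, hδ]
    simp only [mul_add, mul_ite, mul_one, mul_zero, ite_mul, zero_mul, one_mul,
      Finset.sum_add_distrib, Finset.sum_ite_eq, Finset.sum_ite_eq',
      Finset.mem_univ, if_true, Finset.sum_ite_irrel, Finset.sum_const_zero]
    rw [hxe i j]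
    linear_combination (x i j) * h2
  -- symmetric decomposition
  have sdec : ∀ x : Matrix (Fin n) (Fin n) F, x.transpose = x →
      x = (2:F)⁻¹ • ∑ i, ∑ j, x i j • Echeck i j := by
    intro x hx
    have hxe : ∀ a b : Fin n, x b a = x a b := fun a b => by
      simpa using congrFun (congrFun hx a) b
    ext a b
    simp only [Matrix.smul_apply, Matrix.sum_apply, hE, Matrix.add_apply,
      Matrix.single, Matrix.of_apply, smul_eq_mul, mul_add, mul_ite, mul_one, mul_zero,
      ite_and, Finset.sum_add_distrib, Finset.sum_ite_eq, Finset.sum_ite_eq',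
      Finset.mem_univ, if_true, Finset.sum_ite_irrel, Finset.sum_const_zero]
    rw [hxe a b]
    linear_combination (-(x a b)) * h2
  -- span membership
  have hspan : ∀ x : Matrix (Fin n) (Fin n) F, x.transpose = x →
      x ∈ Submodule.span F (Set.range (fun p : Fin n × Fin n => Echeck p.1 p.2)) := by
    intro x hx
    rw [sdec x hx]
    exact Submodule.smul_mem _ _ (Submodule.sum_mem _ fun i _ => Submodule.sum_mem _
      fun j _ => Submodule.smul_mem _ _ (Submodule.subset_span ⟨(i, j), rfl⟩))
  -- bijectivity onto symmetric matrices
  have bij : ∀ y : Λ, ∃! x : Matrix (Fin n) (Fin n) F, x.transpose = x ∧ f x = y := by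
    intro y
    set x₀ : Matrix (Fin n) (Fin n) F :=
      ∑ p : {p : Fin n × Fin n // p.1 ≤ p.2}, bΛ.repr y p • Echeck p.1.1 p.1.2 with hx₀
    have hx₀sym : x₀.transpose = x₀ := by
      rw [hx₀]
      simp only [hE, Matrix.transpose_sum, Matrix.transpose_smul, Matrix.transpose_add,
        st18_Etrans]
      exact Finset.sum_congr rfl fun p _ => by rw [add_comm]
    have hfx₀ : f x₀ = y := by
      rw [hx₀, map_sum]
      simp only [map_smul, fEcheck]
      calc ∑ p : {p : Fin n × Fin n // p.1 ≤ p.2}, bΛ.repr y p • s (e p.1.1) (e p.1.2)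
          = ∑ p : {p : Fin n × Fin n // p.1 ≤ p.2}, bΛ.repr y p • bΛ p :=
            Finset.sum_congr rfl fun p _ => by rw [hb]
        _ = y := bΛ.sum_repr y
    refine ⟨x₀, ⟨hx₀sym, hfx₀⟩, ?_⟩
    rintro x ⟨hxsym, hfx⟩
    ext a b
    rw [← extract x hxsym a b, ← extract x₀ hx₀sym a b, hfx, hfx₀]
  -- the two trilinear maps
  set L : Matrix (Fin n) (Fin n) F →ₗ[F] Matrix (Fin n) (Fin n) F →ₗ[F]
      Matrix (Fin n) (Fin n) F →ₗ[F] Λ :=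
    LinearMap.mk₂ F
      (fun x y => f ∘ₗ (LinearMap.mulLeft F (x * y) + LinearMap.mulRight F (y * x)))
      (fun x₁ x₂ y => by
        ext z
        simp only [LinearMap.comp_apply, LinearMap.add_apply, LinearMap.mulLeft_apply,
          LinearMap.mulRight_apply, add_mul, mul_add, map_add]
        abel)
      (fun c x y => by
        ext z
        simp only [LinearMap.comp_apply, LinearMap.add_apply, LinearMap.smul_apply,
          LinearMap.mulLeft_apply, LinearMap.mulRight_apply, smul_mul_assoc,
          mul_smul_comm, map_add, map_smul, smul_add])
      (fun x y₁ y₂ => by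
        ext z
        simp only [LinearMap.comp_apply, LinearMap.add_apply, LinearMap.mulLeft_apply,
          LinearMap.mulRight_apply, add_mul, mul_add, map_add]
        abel)
      (fun c x y => by
        ext z
        simp only [LinearMap.comp_apply, LinearMap.add_apply, LinearMap.smul_apply,
          LinearMap.mulLeft_apply, LinearMap.mulRight_apply, smul_mul_assoc,
          mul_smul_comm, map_add, map_smul, smul_add]) with hLdef
  set R : Matrix (Fin n) (Fin n) F →ₗ[F] Matrix (Fin n) (Fin n) F →ₗ[F]
      Matrix (Fin n) (Fin n) F →ₗ[F] Λ :=
    LinearMap.mk₂ F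
      (fun x y => (T (f x) (f y)) ∘ₗ f + (-4 * β (f x) (f y)) • f)
      (fun x₁ x₂ y => by
        ext z
        simp only [LinearMap.comp_apply, LinearMap.add_apply, LinearMap.smul_apply,
          map_add, LinearMap.add_apply, mul_add, add_smul]
        abel)
      (fun c x y => by
        ext z
        simp only [LinearMap.comp_apply, LinearMap.add_apply, LinearMap.smul_apply,
          map_smul, LinearMap.smul_apply, smul_add, smul_smul, smul_eq_mul]
        module)
      (fun x y₁ y₂ => by
        ext z
        simp only [LinearMap.comp_apply, LinearMap.add_apply, LinearMap.smul_apply,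
          map_add, LinearMap.add_apply, mul_add, add_smul]
        abel)
      (fun c x y => by
        ext z
        simp only [LinearMap.comp_apply, LinearMap.add_apply, LinearMap.smul_apply,
          map_smul, LinearMap.smul_apply, smul_add, smul_smul, smul_eq_mul]
        module) with hRdef
  have main : ∀ x, x ∈ Submodule.span F (Set.range fun p : Fin n × Fin n => Echeck p.1 p.2) →
      ∀ y, y ∈ Submodule.span F (Set.range fun p : Fin n × Fin n => Echeck p.1 p.2) →
      ∀ z, z ∈ Submodule.span F (Set.range fun p : Fin n × Fin n => Echeck p.1 p.2) →
      L x y z = R x y z := by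
    intro x hx
    induction hx using Submodule.span_induction with
    | mem x hxmem =>
      intro y hy
      induction hy using Submodule.span_induction with
      | mem y hymem =>
        intro z hz
        induction hz using Submodule.span_induction with
        | mem z hzmem =>
          obtain ⟨p, rfl⟩ := hxmem
          obtain ⟨q, rfl⟩ := hymem
          obtain ⟨r, rfl⟩ := hzmem
          rw [hLdef, hRdef]
          simp only [LinearMap.mk₂_apply, LinearMap.comp_apply, LinearMap.add_apply,
            LinearMap.mulLeft_apply, LinearMap.mulRight_apply, LinearMap.smul_apply,
            ← mul_assoc]
          exact gen p.1 p.2 q.1 q.2 r.1 r.2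
        | zero => simp
        | add z₁ z₂ _ _ h1 h2 => simp [map_add, h1, h2]
        | smul c z _ h1 => simp [map_smul, h1]
      | zero => intro z hz; simp
      | add y₁ y₂ _ _ h1 h2 =>
        intro z hz
        simp [map_add, LinearMap.add_apply, h1 z hz, h2 z hz]
      | smul c y _ h1 =>
        intro z hz
        simp [map_smul, LinearMap.smul_apply, h1 z hz]
    | zero => intro y hy z hz; simp
    | add x₁ x₂ _ _ h1 h2 =>
      intro y hy z hz
      simp [map_add, LinearMap.add_apply, h1 y hy z hz, h2 y hy z hz]
    | smul c x _ h1 =>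
      intro y hy z hz
      simp [map_smul, LinearMap.smul_apply, h1 y hy z hz]
  -- homomorphism property
  have hom : ∀ x y z : Matrix (Fin n) (Fin n) F,
      x.transpose = x → y.transpose = y → z.transpose = z →
      f (x * y.transpose * z + z * y.transpose * x)
        = T (f x) (f y) (f z) + ((-4 : F) * β (f x) (f y)) • f z := by
    intro x y z hx hy hz
    rw [hy]
    have hmn := main x (hspan x hx) y (hspan y hy) z (hspan z hz)
    rw [hLdef, hRdef] at hmn
    simp only [LinearMap.mk₂_apply, LinearMap.comp_apply, LinearMap.add_apply,
      LinearMap.mulLeft_apply, LinearMap.mulRight_apply, LinearMap.smul_apply,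
      ← mul_assoc] at hmn
    exact hmn
  -- similarity of bilinear forms
  have sim : ∀ x y : Matrix (Fin n) (Fin n) F,
      x.transpose = x → y.transpose = y →
      β (f x) (f y) = (2 : F)⁻¹ *
        ((∑ i : Fin n, x i i * y i i)
          + 2 * ∑ i : Fin n, ∑ j ∈ Finset.Ioi i, x i j * y i j) := by
    intro x y hx hy
    have hxe : ∀ a b : Fin n, x b a = x a b := fun a b => by
      simpa using congrFun (congrFun hx a) b
    have hye : ∀ a b : Fin n, y b a = y a b := fun a b => by
      simpa using congrFun (congrFun hy a) b
    have e1 : β (f x) (f y) = (2:F)⁻¹ * ∑ i, ∑ j, x i j * y i j := by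
      rw [show (f y) = (2:F)⁻¹ • ∑ i, ∑ j, y i j • s (e i) (e j) from by
        rw [hfdef]; exact st18_f_apply _ y]
      rw [map_smul]
      simp only [map_sum, map_smul, smul_eq_mul, extract x hx]
      congr 1
      exact Finset.sum_congr rfl fun i _ => Finset.sum_congr rfl fun j _ => mul_comm _ _
    rw [e1, st18_sum_split (fun i j => x i j * y i j) (fun i j => by
      show x i j * y i j = x j i * y j i
      rw [hxe i j, hye i j])]
  exact ⟨f, fEcheck, bij, hom, sim⟩
end
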